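/- Let r ∈ ℚ_{>0} be such that S_r is atomic (i.e., r = 1 or n(r) > 1). Then the following are equivalent: (1) r ∈ ℕ; (2) ω(S_r) = sup { ω(a) : a an atom of S_r } < ∞; (3) S_r is globally tame, i.e., sup { t(a) : a an atom of S_r } < ∞; (4) S_r is locally tame, i.e., t(a) < ∞ for every atom a of S_r. -/

import Mathlib

open Finsupp
open scoped ENNReal

/-- The Puiseux monoid (rational cyclic semiring) `S_r`, the additive submonoid of `ℚ`
generated by the nonnegative powers of `r`. -/
def S (r : ℚ) : AddSubmonoid ℚ := AddSubmonoid.closure {x : ℚ | ∃ n : ℕ, x = r ^ n}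

/-- A factorization of `x` over the powers of `r`: a finitely supported choice of
coefficients `α i` with `∑ α i * r ^ i = x`. -/
def IsFactorization (r x : ℚ) (α : ℕ →₀ ℕ) : Prop :=
  (α.sum fun i c => (c : ℚ) * r ^ i) = x

/-- The length of a factorization. -/
def flen (α : ℕ →₀ ℕ) : ℕ := α.sum fun _ c => c

/-- The set of lengths of factorizations of `x` over the powers of `r`. -/
def lengthSet (r x : ℚ) : Set ℕ :=
  {t | ∃ α : ℕ →₀ ℕ, IsFactorization r x α ∧ flen α = t}

/-- An atom of `S_r`: a nonzero element that is not the sum of two nonzero elements. -/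
def IsAtomS (r a : ℚ) : Prop :=
  a ∈ S r ∧ a ≠ 0 ∧ ¬ ∃ y z : ℚ, y ∈ S r ∧ z ∈ S r ∧ y ≠ 0 ∧ z ≠ 0 ∧ a = y + z

/-- The set of lengths of `x` as sums of atoms of `S_r`. -/
def atomLengthSet (r x : ℚ) : Set ℕ :=
  {t | ∃ f : Fin t → ℚ, (∀ i, IsAtomS r (f i)) ∧ ∑ i, f i = x}

/-- `x` divides `y` in `S_r`. -/
def DvdS (r x y : ℚ) : Prop := y - x ∈ S r

/-- `n` bounds the omega-primality of `x` in `S_r`. -/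
def OmegaBound (r x : ℚ) (n : ℕ) : Prop :=
  ∀ (t : ℕ) (a : Fin t → ℚ), (∀ i, IsAtomS r (a i)) → DvdS r x (∑ i, a i) →
    ∃ T : Finset (Fin t), T.card ≤ n ∧ DvdS r x (∑ i ∈ T, a i)

/-- The omega invariant of `x` in `S_r`. -/
noncomputable def omegaS (r x : ℚ) : ℕ∞ :=
  sInf {N : ℕ∞ | ∃ n : ℕ, N = n ∧ OmegaBound r x n}

/-- A factorization of `x` into a multiset of atoms of `S_r`. -/
def IsMFactorization (r x : ℚ) (z : Multiset ℚ) : Prop :=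
  (∀ a ∈ z, IsAtomS r a) ∧ z.sum = x

/-- The distance between two multiset factorizations. -/
def mdist (z z' : Multiset ℚ) : ℕ :=
  max (Multiset.card z - Multiset.card (z ∩ z'))
      (Multiset.card z' - Multiset.card (z ∩ z'))

/-- `n` bounds the local tame degree of the atom `a` in `S_r`. -/
def TameBound (r a : ℚ) (n : ℕ) : Prop :=
  ∀ x : ℚ, x ∈ S r → x - a ∈ S r →
    ∀ z : Multiset ℚ, IsMFactorization r x z →
      ∃ z' : Multiset ℚ, IsMFactorization r x z' ∧ a ∈ z' ∧ mdist z z' ≤ n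

/-- The local tame degree of the atom `a` in `S_r`. -/
noncomputable def tameS (r a : ℚ) : ℕ∞ :=
  sInf {N : ℕ∞ | ∃ n : ℕ, N = n ∧ TameBound r a n}


lemma pow_mem_S (r : ℚ) (i : ℕ) : r ^ i ∈ S r :=
  AddSubmonoid.subset_closure ⟨i, rfl⟩

lemma one_mem_S (r : ℚ) : (1:ℚ) ∈ S r := by
  simpa using pow_mem_S r 0

lemma nsmul_pow_mem_S (r : ℚ) (c i : ℕ) : (c:ℚ) * r ^ i ∈ S r := by
  have := AddSubmonoid.nsmul_mem (S r) (pow_mem_S r i) c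
  simpa [nsmul_eq_mul] using this

lemma nat_mem_S (r : ℚ) (m : ℕ) : (m:ℚ) ∈ S r := by
  simpa using nsmul_pow_mem_S r m 0

private lemma pows_aux (r : ℚ) : ∀ l : Multiset ℚ, (∀ y ∈ l, ∃ n : ℕ, y = r ^ n) →
    ∃ m : Multiset ℕ, (m.map (r ^ ·)).sum = l.sum := by
  intro l
  induction l using Multiset.induction with
  | empty => intro _; exact ⟨0, by simp⟩
  | cons a s ih =>
    intro hl
    obtain ⟨i, hi⟩ := hl a (Multiset.mem_cons_self a s)
    obtain ⟨m, hm⟩ := ih (fun y hy => hl y (Multiset.mem_cons_of_mem hy))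
    exact ⟨i ::ₘ m, by simp [hm, hi]⟩

lemma mem_S_iff {r x : ℚ} : x ∈ S r ↔ ∃ l : Multiset ℕ, (l.map (r ^ ·)).sum = x := by
  constructor
  · intro hx
    obtain ⟨l, hl, hsum⟩ := AddSubmonoid.exists_multiset_of_mem_closure hx
    obtain ⟨m, hm⟩ := pows_aux r l hl
    exact ⟨m, hm.trans hsum⟩
  · rintro ⟨l, rfl⟩
    refine AddSubmonoid.multiset_sum_mem _ _ ?_
    intro y hy
    obtain ⟨i, _, rfl⟩ := Multiset.mem_map.1 hy
    exact pow_mem_S r i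

lemma S_nonneg {r x : ℚ} (h0 : 0 < r) (hx : x ∈ S r) : 0 ≤ x := by
  obtain ⟨l, rfl⟩ := mem_S_iff.1 hx
  refine Multiset.sum_nonneg ?_
  intro y hy
  obtain ⟨i, _, rfl⟩ := Multiset.mem_map.1 hy
  positivity

lemma S_pos_of_ne {r x : ℚ} (h0 : 0 < r) (hx : x ∈ S r) (hne : x ≠ 0) : 0 < x :=
  lt_of_le_of_ne (S_nonneg h0 hx) (Ne.symm hne)

/-- every atom is a power of r -/
lemma atom_is_pow {r a : ℚ} (h0 : 0 < r) (ha : IsAtomS r a) : ∃ i : ℕ, a = r ^ i := by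
  obtain ⟨hmem, hne, hnot⟩ := ha
  obtain ⟨l, hsum⟩ := mem_S_iff.1 hmem
  induction l using Multiset.induction with
  | empty => exact absurd hsum.symm (by simpa using hne)
  | cons i s ih =>
    rcases Multiset.empty_or_exists_mem s with rfl | ⟨j, hj⟩
    · exact ⟨i, by simpa using hsum.symm⟩
    · exfalso
      refine hnot ⟨r ^ i, (s.map (r ^ ·)).sum, pow_mem_S r i, ?_, ?_, ?_, ?_⟩
      · exact mem_S_iff.2 ⟨s, rfl⟩
      · positivity
      · have : (0:ℚ) < (s.map (r ^ ·)).sum := by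
          have hle : r ^ j ≤ (s.map (r ^ ·)).sum := by
            refine Multiset.single_le_sum ?_ _ (Multiset.mem_map_of_mem _ hj)
            intro y hy
            obtain ⟨u, _, rfl⟩ := Multiset.mem_map.1 hy
            positivity
          nlinarith [pow_pos h0 j]
        exact ne_of_gt this
      · rw [← hsum]; simp

section
variable {r : ℚ} (h0 : 0 < r)

lemma num_pos (h0 : 0 < r) : 0 < r.num := Rat.num_pos.2 h0

lemma cast_num (h0 : 0 < r) : ((r.num.toNat : ℕ) : ℚ) = (r.num : ℚ) := by
  exact_mod_cast congrArg (Int.cast : ℤ → ℚ) (Int.toNat_of_nonneg (num_pos h0).le)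

lemma mul_den (h0 : 0 < r) : r * (r.den : ℚ) = ((r.num.toNat : ℕ) : ℚ) := by
  rw [cast_num h0]
  exact_mod_cast Rat.mul_den_eq_num r

lemma coprime_nd (h0 : 0 < r) : Nat.Coprime r.num.toNat r.den := by
  have := r.reduced
  have hp := num_pos h0
  have h : r.num.natAbs = r.num.toNat := by omega
  rwa [h] at this

lemma pow_mul_den_pow (h0 : 0 < r) {j M : ℕ} (hjM : j ≤ M) :
    r ^ j * (r.den : ℚ) ^ M = ((r.num.toNat ^ j * r.den ^ (M - j) : ℕ) : ℚ) := by
  have h1 : r ^ j * (r.den : ℚ) ^ j = ((r.num.toNat : ℕ) : ℚ) ^ j := by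
    rw [← mul_pow, mul_den h0]
  have : (M : ℕ) - j + j = M := Nat.sub_add_cancel hjM
  push_cast
  calc r ^ j * (r.den : ℚ) ^ M = (r ^ j * (r.den:ℚ) ^ j) * (r.den:ℚ) ^ (M - j) := by
        rw [mul_assoc, ← pow_add, Nat.add_sub_cancel' hjM]
    _ = ((r.num.toNat : ℕ) : ℚ) ^ j * (r.den:ℚ) ^ (M-j) := by rw [h1]

lemma multiset_clear (h0 : 0 < r) {l : Multiset ℕ} {M : ℕ} (hM : ∀ j ∈ l, j ≤ M) :
    (((l.map fun j => r.num.toNat ^ j * r.den ^ (M - j)).sum : ℕ) : ℚ)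
      = (l.map (r ^ ·)).sum * (r.den : ℚ) ^ M := by
  induction l using Multiset.induction with
  | empty => simp
  | cons a s ih =>
    have ha := hM a (Multiset.mem_cons_self a s)
    have ihs := ih (fun j hj => hM j (Multiset.mem_cons_of_mem hj))
    simp only [Multiset.map_cons, Multiset.sum_cons, Nat.cast_add, add_mul, ihs,
      pow_mul_den_pow h0 ha]

lemma map_pow_sum_pos (h0 : 0 < r) {t : Multiset ℕ} (ht : t ≠ 0) :
    0 < (t.map (r ^ ·)).sum := by
  obtain ⟨j, hj⟩ := Multiset.exists_mem_of_ne_zero ht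
  have hle : r ^ j ≤ (t.map (r ^ ·)).sum := by
    refine Multiset.single_le_sum ?_ _ (Multiset.mem_map_of_mem _ hj)
    intro y hy
    obtain ⟨u, _, rfl⟩ := Multiset.mem_map.1 hy
    positivity
  calc (0:ℚ) < r ^ j := pow_pos h0 j
    _ ≤ _ := hle

lemma pow_is_atom (h0 : 0 < r) (hn : 1 < r.num) (hd : 1 < r.den) (k : ℕ) :
    IsAtomS r (r ^ k) := by
  set n := r.num.toNat with hndef
  set d := r.den with hddef
  have hn2 : 2 ≤ n := by
    have : (1:ℤ) < n := by rw [hndef, Int.toNat_of_nonneg (num_pos h0).le]; exact hn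
    exact_mod_cast this
  have hd2 : 2 ≤ d := hd
  have hcop : Nat.Coprime n d := coprime_nd h0
  have hr1 : r ≠ 1 := by
    intro h; rw [h] at hn; simp at hn
  refine ⟨pow_mem_S r k, pow_ne_zero k h0.ne', ?_⟩
  rintro ⟨y, z, hy, hz, hy0, hz0, heq⟩
  obtain ⟨ly, hly⟩ := mem_S_iff.1 hy
  obtain ⟨lz, hlz⟩ := mem_S_iff.1 hz
  have hly0 : ly ≠ 0 := by rintro rfl; simp at hly; exact hy0 hly.symm
  have hlz0 : lz ≠ 0 := by rintro rfl; simp at hlz; exact hz0 hlz.symm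
  set l := ly + lz with hl
  have hsum : (l.map (r ^ ·)).sum = r ^ k := by
    rw [hl, Multiset.map_add, Multiset.sum_add, hly, hlz, ← heq]
  have hcard : 2 ≤ Multiset.card l := by
    rw [hl, Multiset.card_add]
    have h1 : 1 ≤ Multiset.card ly := Multiset.card_pos.2 hly0
    have h2 : 1 ≤ Multiset.card lz := Multiset.card_pos.2 hlz0
    omega
  have claimA : ∀ j ∈ l, ¬ (r ^ k ≤ r ^ j) := by
    intro j hj hge
    obtain ⟨t, htl⟩ := Multiset.exists_cons_of_mem hj
    have ht0 : t ≠ 0 := by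
      intro h; rw [htl, h] at hcard; simp at hcard
    have hpos : 0 < (t.map (r ^ ·)).sum := map_pow_sum_pos h0 ht0
    rw [htl, Multiset.map_cons, Multiset.sum_cons] at hsum
    nlinarith
  rcases lt_or_gt_of_ne hr1 with hrlt | hrgt
  · -- r < 1 : all exponents are > k
    have hall : ∀ j ∈ l, k < j := by
      intro j hj
      by_contra hcon
      push_neg at hcon
      exact claimA j hj (pow_le_pow_of_le_one h0.le hrlt.le hcon)
    set M := k + l.sum with hMdef
    have hM : ∀ j ∈ l, j ≤ M := by
      intro j hj
      have : j ≤ l.sum := Multiset.single_le_sum (fun x _ => Nat.zero_le x) j hj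
      omega
    have hkM : k ≤ M := by omega
    have hcast : (((l.map fun j => n ^ j * d ^ (M - j)).sum : ℕ) : ℚ)
        = ((n ^ k * d ^ (M - k) : ℕ) : ℚ) := by
      rw [multiset_clear h0 hM, hsum, pow_mul_den_pow h0 hkM]
    have heqn : (l.map fun j => n ^ j * d ^ (M - j)).sum = n ^ k * d ^ (M - k) :=
      Nat.cast_injective hcast
    have hdvd : n ^ (k + 1) ∣ (l.map fun j => n ^ j * d ^ (M - j)).sum := by
      refine Multiset.dvd_sum ?_
      intro x hx
      obtain ⟨j, hj, rfl⟩ := Multiset.mem_map.1 hx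
      exact Dvd.dvd.mul_right (pow_dvd_pow n (hall j hj)) _
    rw [heqn, pow_succ] at hdvd
    have hn1 : n ∣ d ^ (M - k) :=
      (mul_dvd_mul_iff_left (a := n ^ k) (by positivity)).1 hdvd
    have : n = 1 := (Nat.Coprime.pow_right _ hcop).eq_one_of_dvd hn1
    omega
  · -- r > 1 : all exponents are < k
    have hall : ∀ j ∈ l, j < k := by
      intro j hj
      by_contra hcon
      push_neg at hcon
      exact claimA j hj (pow_le_pow_right₀ hrgt.le hcon)
    have hM : ∀ j ∈ l, j ≤ k := fun j hj => (hall j hj).le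
    have hcast : (((l.map fun j => n ^ j * d ^ (k - j)).sum : ℕ) : ℚ)
        = ((n ^ k * d ^ (k - k) : ℕ) : ℚ) := by
      rw [multiset_clear h0 hM, hsum, pow_mul_den_pow h0 le_rfl]
    have heqn : (l.map fun j => n ^ j * d ^ (k - j)).sum = n ^ k := by
      have := Nat.cast_injective hcast
      simpa using this
    have hdvd : d ∣ (l.map fun j => n ^ j * d ^ (k - j)).sum := by
      refine Multiset.dvd_sum ?_
      intro x hx
      obtain ⟨j, hj, rfl⟩ := Multiset.mem_map.1 hx
      have : d ∣ d ^ (k - j) := dvd_pow_self d (by have := hall j hj; omega)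
      exact Dvd.dvd.mul_left this _
    rw [heqn] at hdvd
    have : d = 1 := (Nat.Coprime.pow_right _ hcop.symm).eq_one_of_dvd hdvd
    omega
end

open Finset in
lemma chain_lemma (n d k B : ℕ) (hd : 1 ≤ d) (hnd : d < n) (hcop : Nat.Coprime n d)
    (hk : 1 ≤ k) (hkB : k ≤ B) (c : ℕ → ℕ) (hc0 : 1 ≤ c 0)
    (heq : ∑ i ∈ range B, c i * n ^ i * d ^ (B - i) = n ^ k * d ^ B) :
    k + 1 ≤ ∑ i ∈ range k, c i := by
  have hn : 1 ≤ n := by omega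
  set s : ℕ → ℕ := fun j => ∑ i ∈ range j, c i * n ^ i * d ^ (j - i) with hs
  -- F1
  have F1 : ∀ j, s (j + 1) = d * (s j + c j * n ^ j) := by
    intro j
    rw [hs]
    simp only [sum_range_succ]
    rw [mul_add, Finset.mul_sum]
    congr 1
    · refine sum_congr rfl ?_
      intro i hi
      have hij : i < j := mem_range.1 hi
      have : j + 1 - i = (j - i) + 1 := by omega
      rw [this, pow_succ]
      ring
    · have : j + 1 - j = 1 := by omega
      rw [this, pow_one]
      ring
  -- F2 : n^j ∣ s j for j ≤ k
  have F2 : ∀ j, j ≤ k → n ^ j ∣ s j := by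
    intro j hj
    have hsplit : ∑ i ∈ range j, c i * n ^ i * d ^ (B - i)
        + ∑ i ∈ Ico j B, c i * n ^ i * d ^ (B - i) = n ^ k * d ^ B := by
      rw [← heq, range_eq_Ico, Finset.sum_Ico_consecutive]
      · rw [range_eq_Ico]
      · exact Nat.zero_le j
      · omega
    have hlow : ∑ i ∈ range j, c i * n ^ i * d ^ (B - i) = d ^ (B - j) * s j := by
      rw [hs, Finset.mul_sum]
      refine sum_congr rfl ?_
      intro i hi
      have hij : i < j := mem_range.1 hi
      have : B - i = (B - j) + (j - i) := by omega
      rw [this, pow_add]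
      ring
    have hup : n ^ j ∣ ∑ i ∈ Ico j B, c i * n ^ i * d ^ (B - i) := by
      refine dvd_sum ?_
      intro i hi
      have : j ≤ i := (mem_Ico.1 hi).1
      exact Dvd.dvd.mul_right (Dvd.dvd.mul_left (pow_dvd_pow n this) _) _
    have hrhs : n ^ j ∣ n ^ k * d ^ B := Dvd.dvd.mul_right (pow_dvd_pow n hj) _
    have hlowdvd : n ^ j ∣ d ^ (B - j) * s j := by
      rw [← hlow]
      have := Nat.dvd_sub hrhs hup
      rwa [← hsplit, Nat.add_sub_cancel] at this
    have hcop2 : Nat.Coprime (n ^ j) (d ^ (B - j)) := Nat.Coprime.pow _ _ hcop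
    exact hcop2.dvd_of_dvd_mul_left hlowdvd
  -- w and T
  set w : ℕ → ℕ := fun j => s j + c j * n ^ j with hw
  have hwdvd : ∀ j, j + 1 ≤ k → n ^ (j + 1) ∣ w j := by
    intro j hj
    have h1 : n ^ (j + 1) ∣ s (j + 1) := F2 (j + 1) hj
    rw [F1 j] at h1
    have hcop2 : Nat.Coprime (n ^ (j + 1)) d := Nat.Coprime.pow_left _ hcop
    exact hcop2.dvd_of_dvd_mul_left h1
  set T : ℕ → ℕ := fun j => w j / n ^ (j + 1) with hT
  have hTw : ∀ j, j + 1 ≤ k → n ^ (j + 1) * T j = w j := by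
    intro j hj
    exact Nat.mul_div_cancel' (hwdvd j hj)
  have hwpos : ∀ j, 1 ≤ w j := by
    intro j
    rcases Nat.eq_zero_or_pos j with rfl | hjpos
    · simp only [hw, hs]
      simp
      omega
    · have : c 0 * n ^ 0 * d ^ (j - 0) ≤ s j := by
        refine Finset.single_le_sum (f := fun i => c i * n ^ i * d ^ (j - i)) ?_ ?_
        · intro i _; exact Nat.zero_le _
        · exact Finset.mem_range.2 hjpos
      have hdj : 1 ≤ d ^ (j - 0) := Nat.one_le_pow _ _ (by omega)
      have : 1 ≤ s j := le_trans (by nlinarith) this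
      simp only [hw]; omega
  have hTpos : ∀ j, j + 1 ≤ k → 1 ≤ T j := by
    intro j hj
    rcases Nat.eq_zero_or_pos (T j) with h | h
    · exfalso
      have := hTw j hj
      rw [h, Nat.mul_zero] at this
      have := hwpos j
      omega
    · exact h
  -- R0
  have R0 : n * T 0 = c 0 := by
    have := hTw 0 hk
    simpa [hw, hs] using this
  -- R1
  have R1 : ∀ j, j + 2 ≤ k → n * T (j + 1) = d * T j + c (j + 1) := by
    intro j hj
    have hw1 : w (j + 1) = d * w j + c (j + 1) * n ^ (j + 1) := by
      simp only [hw]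
      rw [F1 j]
    have e1 : n ^ (j + 2) * T (j + 1) = w (j + 1) := hTw (j + 1) hj
    have e2 : n ^ (j + 1) * T j = w j := hTw j (by omega)
    have : n ^ (j + 1) * (n * T (j + 1)) = n ^ (j + 1) * (d * T j + c (j + 1)) := by
      rw [Nat.mul_add]
      calc n ^ (j + 1) * (n * T (j + 1)) = n ^ (j + 2) * T (j + 1) := by ring
        _ = d * w j + c (j + 1) * n ^ (j + 1) := by rw [e1, hw1]
        _ = d * (n ^ (j + 1) * T j) + c (j + 1) * n ^ (j + 1) := by rw [e2]
        _ = n ^ (j + 1) * (d * T j) + n ^ (j + 1) * c (j + 1) := by ring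
    exact Nat.eq_of_mul_eq_mul_left (Nat.pow_pos (by omega)) this
  -- identity over ℤ
  have hid : ∀ m, m + 1 ≤ k →
      (∑ j ∈ range (m + 1), (c j : ℤ))
        = n * T m + ((n : ℤ) - d) * ∑ j ∈ range m, (T j : ℤ) := by
    intro m
    induction m with
    | zero =>
      intro _
      simp [← R0]
      try push_cast
      try ring
    | succ m ih =>
      intro hm
      have ihm := ih (by omega)
      rw [sum_range_succ, ihm]
      have := R1 m (by omega)
      have hcast : (n : ℤ) * T (m + 1) = d * T m + c (m + 1) := by exact_mod_cast this
      rw [sum_range_succ (f := fun j => (T j : ℤ))]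
      linarith [hcast]
  -- conclude
  have hfin := hid (k - 1) (by omega)
  have hrange : k - 1 + 1 = k := by omega
  rw [hrange] at hfin
  have hT1 : (1 : ℤ) ≤ (T (k - 1) : ℤ) := by exact_mod_cast hTpos (k - 1) (by omega)
  have hTsum : ((k - 1 : ℕ) : ℤ) ≤ ∑ j ∈ range (k - 1), (T j : ℤ) := by
    calc ((k - 1 : ℕ) : ℤ) = ∑ j ∈ range (k - 1), (1 : ℤ) := by simp
      _ ≤ _ := by
          refine Finset.sum_le_sum ?_
          intro j hj
          have : j + 1 ≤ k := by have := Finset.mem_range.1 hj; omega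
          exact_mod_cast hTpos j this
  have hnd' : (1 : ℤ) ≤ (n : ℤ) - d := by
    have : d + 1 ≤ n := hnd
    have h1 : ((d:ℤ)) + 1 ≤ (n:ℤ) := by exact_mod_cast this
    omega
  have hn2 : (2 : ℤ) ≤ (n : ℤ) := by
    have : 2 ≤ n := by omega
    exact_mod_cast this
  have hSnn : (0 : ℤ) ≤ ∑ j ∈ range (k - 1), (T j : ℤ) := by positivity
  have h1 : (n : ℤ) ≤ (n : ℤ) * (T (k - 1) : ℤ) := le_mul_of_one_le_right (by omega) hT1
  have h2 : ((k - 1 : ℕ) : ℤ) ≤ ((n:ℤ) - (d:ℤ)) * ∑ j ∈ range (k - 1), (T j : ℤ) := by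
    calc ((k - 1 : ℕ) : ℤ) ≤ ∑ j ∈ range (k - 1), (T j : ℤ) := hTsum
      _ = 1 * ∑ j ∈ range (k - 1), (T j : ℤ) := (one_mul _).symm
      _ ≤ _ := mul_le_mul_of_nonneg_right hnd' hSnn
  have hk1 : ((k - 1 : ℕ) : ℤ) = (k : ℤ) - 1 := by
    have : (1:ℕ) ≤ k := hk
    push_cast [Nat.cast_sub this]
    ring
  have hfinal : ((k : ℤ) + 1) ≤ ∑ j ∈ range k, (c j : ℤ) := by
    rw [hfin]
    rw [hk1] at h2
    omega
  have : ((k + 1 : ℕ) : ℤ) ≤ ((∑ i ∈ range k, c i : ℕ) : ℤ) := by push_cast; exact hfinal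
  exact_mod_cast this

section
variable {r : ℚ}

lemma pow_injective (h0 : 0 < r) (hne : r ≠ 1) : Function.Injective (fun i : ℕ => r ^ i) := by
  intro i j hij
  simp only at hij
  by_contra hcon
  rcases lt_or_gt_of_ne hne with hlt | hgt
  · rcases Nat.lt_or_ge i j with h | h
    · have := pow_lt_pow_right_of_lt_one₀ h0 hlt h
      rw [hij] at this; exact lt_irrefl _ this
    · have hj : j < i := by omega
      have := pow_lt_pow_right_of_lt_one₀ h0 hlt hj
      rw [hij] at this; exact lt_irrefl _ this
  · rcases Nat.lt_or_ge i j with h | h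
    · have := pow_lt_pow_right₀ hgt h
      rw [hij] at this; exact lt_irrefl _ this
    · have hj : j < i := by omega
      have := pow_lt_pow_right₀ hgt hj
      rw [hij] at this; exact lt_irrefl _ this

lemma exists_bound (z : Multiset ℚ) (h : ∀ a ∈ z, ∃ i : ℕ, a = r ^ i) :
    ∃ B, ∀ a ∈ z, ∃ i, i < B ∧ a = r ^ i := by
  induction z using Multiset.induction with
  | empty => exact ⟨0, by simp⟩
  | cons a s ih =>
    obtain ⟨B, hB⟩ := ih (fun y hy => h y (Multiset.mem_cons_of_mem hy))
    obtain ⟨i0, hi0⟩ := h a (Multiset.mem_cons_self a s)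
    refine ⟨max B (i0 + 1), ?_⟩
    intro y hy
    rcases Multiset.mem_cons.1 hy with rfl | hy'
    · exact ⟨i0, by omega, hi0⟩
    · obtain ⟨i, hi, hiy⟩ := hB y hy'
      exact ⟨i, by omega, hiy⟩

lemma count_repr (h0 : 0 < r) (hne : r ≠ 1) (B : ℕ) (z : Multiset ℚ)
    (hz : ∀ a ∈ z, ∃ i, i < B ∧ a = r ^ i) :
    z.sum = ∑ i ∈ Finset.range B, ((z.count (r ^ i) : ℚ)) * r ^ i ∧
    Multiset.card z = ∑ i ∈ Finset.range B, z.count (r ^ i) := by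
  have hinj := pow_injective h0 hne
  induction z using Multiset.induction with
  | empty => simp
  | cons a s ih =>
    obtain ⟨i0, hi0B, rfl⟩ := hz a (Multiset.mem_cons_self a s)
    obtain ⟨hs1, hs2⟩ := ih (fun y hy => hz y (Multiset.mem_cons_of_mem hy))
    have hcnt : ∀ i, (r ^ i0 ::ₘ s).count (r ^ i) =
        s.count (r ^ i) + if i = i0 then 1 else 0 := by
      intro i
      rw [Multiset.count_cons]
      congr 1
      by_cases h : i = i0
      · simp [h]
      · have : r ^ i ≠ r ^ i0 := fun hc => h (hinj hc)
        simp [h, this]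
    constructor
    · rw [Multiset.sum_cons, hs1]
      have : ∑ i ∈ Finset.range B, (((r ^ i0 ::ₘ s).count (r ^ i) : ℚ)) * r ^ i
          = ∑ i ∈ Finset.range B, (((s.count (r ^ i) : ℚ)) * r ^ i
              + (if i = i0 then (1:ℚ) else 0) * r ^ i) := by
        refine Finset.sum_congr rfl ?_
        intro i _
        rw [hcnt i]
        push_cast
        by_cases h : i = i0 <;> simp [h] <;> ring
      rw [this, Finset.sum_add_distrib]
      have : ∑ i ∈ Finset.range B, (if i = i0 then (1:ℚ) else 0) * r ^ i = r ^ i0 := by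
        have h1 : ∑ i ∈ Finset.range B, (if i = i0 then (1:ℚ) else 0) * r ^ i
            = ∑ i ∈ Finset.range B, (if i = i0 then (1:ℚ) * r ^ i else 0) := by
          refine Finset.sum_congr rfl ?_
          intro i _
          by_cases h : i = i0 <;> simp [h]
        rw [h1, Finset.sum_ite_eq' (Finset.range B) i0 (fun i => (1:ℚ) * r ^ i)]
        simp [Finset.mem_range.2 hi0B]
      rw [this]
      ring
    · rw [Multiset.card_cons, hs2]
      have : ∑ i ∈ Finset.range B, (r ^ i0 ::ₘ s).count (r ^ i)
          = ∑ i ∈ Finset.range B, (s.count (r ^ i) + if i = i0 then 1 else 0) := by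
        exact Finset.sum_congr rfl (fun i _ => hcnt i)
      rw [this, Finset.sum_add_distrib, Finset.sum_ite_eq' (Finset.range B) i0 (fun _ => 1)]
      simp [Finset.mem_range.2 hi0B]
end

section
variable {r : ℚ}

lemma natsum_cast (m : ℕ) (l : Multiset ℕ) :
    (l.map (((m:ℚ)) ^ ·)).sum = (((l.map (m ^ ·)).sum : ℕ) : ℚ) := by
  induction l using Multiset.induction with
  | empty => simp
  | cons a s ih =>
    rw [Multiset.map_cons, Multiset.map_cons, Multiset.sum_cons, Multiset.sum_cons, ih]
    push_cast
    ring

lemma atom_eq_one {m : ℕ} (hm : r = (m:ℚ)) {a : ℚ} (ha : IsAtomS r a) : a = 1 := by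
  obtain ⟨hmem, hne, hnot⟩ := ha
  obtain ⟨l, hl⟩ := mem_S_iff.1 hmem
  subst hm
  rw [natsum_cast] at hl
  set am := (l.map (m ^ ·)).sum with ham
  have ham0 : am ≠ 0 := by rintro h; rw [h] at hl; simp at hl; exact hne hl.symm
  rcases Nat.lt_or_ge am 2 with h2 | h2
  · have : am = 1 := by omega
    rw [← hl, this]; norm_num
  · exfalso
    refine hnot ⟨1, ((am - 1 : ℕ) : ℚ), one_mem_S _, nat_mem_S _ _, one_ne_zero, ?_, ?_⟩
    · have : 1 ≤ am - 1 := by omega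
      positivity
    · rw [← hl]
      have : ((am - 1 : ℕ) : ℚ) = (am : ℚ) - 1 := by
        push_cast [Nat.cast_sub (by omega : 1 ≤ am)]; ring
      rw [this]; ring

lemma imp12 (h0 : 0 < r) {m : ℕ} (hm : r = (m:ℚ)) :
    (⨆ a ∈ {a : ℚ | IsAtomS r a}, omegaS r a) < ⊤ := by
  have hb : ∀ a ∈ {a : ℚ | IsAtomS r a}, omegaS r a ≤ (1 : ℕ∞) := by
    intro a ha
    have ha1 : a = 1 := atom_eq_one hm ha
    subst ha1
    refine sInf_le ⟨1, rfl, ?_⟩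
    intro t f hf hd
    have hf1 : ∀ i, f i = 1 := fun i => atom_eq_one hm (hf i)
    have hsum : ∑ i, f i = (t : ℚ) := by
      rw [Finset.sum_congr rfl (fun i _ => hf1 i)]
      simp [Finset.card_univ]
    rw [hsum] at hd
    have ht1 : 1 ≤ t := by
      have h1 : (0:ℚ) ≤ (t:ℚ) - 1 := S_nonneg h0 hd
      by_contra hc
      push_neg at hc
      interval_cases t
      norm_num at h1
    refine ⟨{⟨0, by omega⟩}, by simp, ?_⟩
    rw [Finset.sum_singleton, hf1]
    unfold DvdS
    simpa using AddSubmonoid.zero_mem (S r)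
  calc (⨆ a ∈ {a : ℚ | IsAtomS r a}, omegaS r a) ≤ 1 := iSup₂_le hb
    _ < ⊤ := by exact_mod_cast WithTop.coe_lt_top 1

lemma imp13 (h0 : 0 < r) {m : ℕ} (hm : r = (m:ℚ)) :
    (⨆ a ∈ {a : ℚ | IsAtomS r a}, tameS r a) < ⊤ := by
  have hb : ∀ a ∈ {a : ℚ | IsAtomS r a}, tameS r a ≤ (0 : ℕ∞) := by
    intro a ha
    have ha1 : a = 1 := atom_eq_one hm ha
    subst ha1
    refine sInf_le ⟨0, rfl, ?_⟩
    intro x hx hx1 z hz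
    obtain ⟨hzat, hzsum⟩ := hz
    have hz0 : z ≠ 0 := by
      rintro rfl
      simp at hzsum
      rw [← hzsum] at hx1
      have := S_nonneg h0 hx1
      norm_num at this
    obtain ⟨y, hy⟩ := Multiset.exists_mem_of_ne_zero hz0
    have hy1 : y = 1 := atom_eq_one hm (hzat y hy)
    refine ⟨z, ⟨hzat, hzsum⟩, hy1 ▸ hy, ?_⟩
    have : z ∩ z = z :=
      le_antisymm Multiset.inter_le_left (Multiset.le_inter le_rfl le_rfl)
    simp [mdist, this]
  calc (⨆ a ∈ {a : ℚ | IsAtomS r a}, tameS r a) ≤ 0 := iSup₂_le hb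
    _ < ⊤ := by exact_mod_cast WithTop.coe_lt_top 0

lemma imp34 (h : (⨆ a ∈ {a : ℚ | IsAtomS r a}, tameS r a) < ⊤) :
    ∀ a : ℚ, IsAtomS r a → tameS r a < ⊤ := by
  intro a ha
  exact lt_of_le_of_lt (le_iSup₂ (f := fun a _ => tameS r a) a ha) h



section
variable {r : ℚ}

/-- key numeric identity -/
lemma pow_den_mul_pow (h0 : 0 < r) (k : ℕ) :
    ((r.den : ℚ)) ^ k * r ^ k = ((r.num.toNat ^ k : ℕ) : ℚ) := by
  have := pow_mul_den_pow h0 (le_refl k)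
  rw [Nat.sub_self, pow_zero, mul_one] at this
  rw [mul_comm]
  exact this

lemma range_clear (h0 : 0 < r) {c : ℕ → ℕ} {B xk : ℕ}
    (hsum : ∑ i ∈ Finset.range B, (c i : ℚ) * r ^ i = (xk : ℚ)) :
    ∑ i ∈ Finset.range B, c i * r.num.toNat ^ i * r.den ^ (B - i) = xk * r.den ^ B := by
  have hQ : (((∑ i ∈ Finset.range B, c i * r.num.toNat ^ i * r.den ^ (B - i) : ℕ)) : ℚ)
      = (((xk * r.den ^ B : ℕ)) : ℚ) := by
    push_cast
    calc (∑ i ∈ Finset.range B, (c i : ℚ) * (r.num.toNat : ℚ) ^ i * (r.den : ℚ) ^ (B - i))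
        = ∑ i ∈ Finset.range B, (c i : ℚ) * r ^ i * (r.den : ℚ) ^ B := by
          refine Finset.sum_congr rfl ?_
          intro i hi
          have hiB : i ≤ B := (Finset.mem_range.1 hi).le
          have h := pow_mul_den_pow h0 hiB
          push_cast at h
          rw [mul_assoc, ← h]
          ring
      _ = (∑ i ∈ Finset.range B, (c i : ℚ) * r ^ i) * (r.den : ℚ) ^ B := by
          rw [Finset.sum_mul]
      _ = (xk : ℚ) * (r.den : ℚ) ^ B := by rw [hsum]
  exact_mod_cast hQ

lemma den_lt_num (h0 : 0 < r) (hr : 1 < r) : r.den < r.num.toNat := by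
  have h1 : (r.den : ℚ) < (r.num.toNat : ℚ) := by
    have hd : (0:ℚ) < (r.den : ℚ) := by
      have := r.den_pos
      exact_mod_cast this
    calc (r.den : ℚ) = 1 * (r.den : ℚ) := (one_mul _).symm
      _ < r * (r.den : ℚ) := by exact mul_lt_mul_of_pos_right hr hd
      _ = _ := mul_den h0
  exact_mod_cast h1

lemma extract_omega_bound {x : ℚ} {N₀ : ℕ} (h : omegaS r x ≤ (N₀ : ℕ∞)) :
    ∃ nb ≤ N₀, OmegaBound r x nb := by
  have hlt : omegaS r x < ((N₀ + 1 : ℕ) : ℕ∞) := by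
    refine lt_of_le_of_lt h ?_
    exact_mod_cast Nat.lt_succ_self N₀
  obtain ⟨b, hb, hblt⟩ := sInf_lt_iff.1 hlt
  obtain ⟨nb, rfl, hbound⟩ := hb
  have : nb ≤ N₀ := by
    have : nb < N₀ + 1 := by exact_mod_cast hblt
    omega
  exact ⟨nb, this, hbound⟩

lemma extract_tame_bound {a : ℚ} (h : tameS r a < ⊤) : ∃ nb, TameBound r a nb := by
  obtain ⟨b, hb, _⟩ := sInf_lt_iff.1 h
  obtain ⟨nb, rfl, hbound⟩ := hb
  exact ⟨nb, hbound⟩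

lemma not_imp2 (h0 : 0 < r) (hn : 1 < r.num) (hd : 1 < r.den)
    (hsup : (⨆ a ∈ {a : ℚ | IsAtomS r a}, omegaS r a) < ⊤) : False := by
  have hne1 : r ≠ 1 := by intro h; rw [h] at hn; simp at hn
  set n := r.num.toNat with hndef
  set d := r.den with hddef
  have hn2 : 2 ≤ n := by
    have : (1:ℤ) < n := by rw [hndef, Int.toNat_of_nonneg (Rat.num_pos.2 h0).le]; exact hn
    exact_mod_cast this
  set N₀ := (⨆ a ∈ {a : ℚ | IsAtomS r a}, omegaS r a).toNat with hN₀def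
  have hN₀ : (N₀ : ℕ∞) = ⨆ a ∈ {a : ℚ | IsAtomS r a}, omegaS r a := ENat.coe_toNat hsup.ne
  have hatom_le : ∀ a, IsAtomS r a → omegaS r a ≤ (N₀ : ℕ∞) := by
    intro a ha
    rw [hN₀]
    exact le_iSup₂ (f := fun a _ => omegaS r a) a ha

  rcases lt_or_gt_of_ne hne1 with hrlt | hrgt
  · -- r < 1 : atom 1
    have h1atom : IsAtomS r 1 := by
      have := pow_is_atom h0 hn hd 0
      rwa [pow_zero] at this
    obtain ⟨nb, hnbN, hbound⟩ := extract_omega_bound (hatom_le 1 h1atom)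
    -- choose k with N₀ * r^k < 1
    obtain ⟨k, hk⟩ := pow_unbounded_of_one_lt (R := ℚ) (N₀ : ℚ) (one_lt_inv₀ h0 |>.2 hrlt)
    have hrk : (N₀ : ℚ) * r ^ k < 1 := by
      rw [inv_pow] at hk
      have hrkpos : (0:ℚ) < r ^ k := pow_pos h0 k
      calc (N₀ : ℚ) * r ^ k < (r ^ k)⁻¹ * r ^ k := by
            exact mul_lt_mul_of_pos_right hk hrkpos
        _ = 1 := inv_mul_cancel₀ hrkpos.ne'
    have hdkQ : ((d : ℚ)) ^ k * r ^ k = ((n : ℚ)) ^ k := by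
      have := pow_den_mul_pow h0 k
      push_cast at this
      convert this using 2
    have hsum : (∑ _i : Fin (d ^ k), r ^ k) = ((n ^ k : ℕ) : ℚ) := by
      rw [Finset.sum_const, Finset.card_univ, Fintype.card_fin, nsmul_eq_mul]
      push_cast
      linear_combination hdkQ
    obtain ⟨T, hTcard, hTdvd⟩ := hbound (d ^ k) (fun _ => r ^ k)
      (fun _ => pow_is_atom h0 hn hd k)
      (by
        rw [hsum]
        unfold DvdS
        have h1 : ((n ^ k : ℕ) : ℚ) - 1 = ((n ^ k - 1 : ℕ) : ℚ) := by
          have : 1 ≤ n ^ k := Nat.one_le_pow _ _ (by omega)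
          push_cast [Nat.cast_sub this]
          ring
        rw [h1]
        exact nat_mem_S r _)
    have hTsum : (∑ _i ∈ T, r ^ k) = (T.card : ℚ) * r ^ k := by
      rw [Finset.sum_const, nsmul_eq_mul]
    rw [hTsum] at hTdvd
    have hge : (0:ℚ) ≤ (T.card : ℚ) * r ^ k - 1 := S_nonneg h0 hTdvd
    have hle : (T.card : ℚ) * r ^ k ≤ (N₀ : ℚ) * r ^ k := by
      have : (T.card : ℚ) ≤ (N₀ : ℚ) := by exact_mod_cast le_trans hTcard hnbN
      exact mul_le_mul_of_nonneg_right this (pow_pos h0 k).le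
    linarith
  · -- r > 1 : atom r^K
    obtain ⟨K, hK⟩ := pow_unbounded_of_one_lt (R := ℚ) (N₀ : ℚ) hrgt
    have hKatom : IsAtomS r (r ^ K) := pow_is_atom h0 hn hd K
    obtain ⟨nb, hnbN, hbound⟩ := extract_omega_bound (hatom_le _ hKatom)
    have h1atom : IsAtomS r 1 := by
      have := pow_is_atom h0 hn hd 0
      rwa [pow_zero] at this
    have hsum : (∑ _i : Fin (n ^ K), (1:ℚ)) = ((n ^ K : ℕ) : ℚ) := by
      rw [Finset.sum_const, Finset.card_univ, Fintype.card_fin, nsmul_eq_mul]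
      ring
    obtain ⟨T, hTcard, hTdvd⟩ := hbound (n ^ K) (fun _ => (1:ℚ))
      (fun _ => h1atom)
      (by
        rw [hsum]
        unfold DvdS
        have hdKQ : ((d : ℚ)) ^ K * r ^ K = ((n : ℚ)) ^ K := by
          have := pow_den_mul_pow h0 K
          push_cast at this
          convert this using 2
        have h1 : ((n ^ K : ℕ) : ℚ) - r ^ K = ((d ^ K - 1 : ℕ) : ℚ) * r ^ K := by
          have hdK : 1 ≤ d ^ K := Nat.one_le_pow _ _ (by omega)
          push_cast [Nat.cast_sub hdK]
          linear_combination -hdKQ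
        rw [h1]
        exact nsmul_pow_mem_S r _ _)
    have hTsum : (∑ _i ∈ T, (1:ℚ)) = (T.card : ℚ) := by
      rw [Finset.sum_const, nsmul_eq_mul]; ring
    rw [hTsum] at hTdvd
    have hge : (0:ℚ) ≤ (T.card : ℚ) - r ^ K := S_nonneg h0 hTdvd
    have hle : (T.card : ℚ) ≤ (N₀ : ℚ) := by exact_mod_cast le_trans hTcard hnbN
    linarith
end

section
variable {r : ℚ}

lemma inter_card_le {z' : Multiset ℚ} (m : ℕ) (a : ℚ) :
    Multiset.card (Multiset.replicate m a ∩ z') ≤ z'.count a := by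
  set w := Multiset.replicate m a ∩ z' with hw
  have hle : w ≤ Multiset.replicate m a := Multiset.inter_le_left
  have hall : ∀ b ∈ w, b = a := by
    intro b hb
    exact Multiset.eq_of_mem_replicate (Multiset.mem_of_le hle hb)
  have hrep : w = Multiset.replicate (Multiset.card w) a := Multiset.eq_replicate_card.2 hall
  have hcount : Multiset.card w = w.count a := by
    conv_lhs => rw [hrep]
    rw [hrep]
    simp [Multiset.count_replicate]
  rw [hcount]
  exact Multiset.count_le_of_le a Multiset.inter_le_right

lemma not_imp4 (h0 : 0 < r) (hn : 1 < r.num) (hd : 1 < r.den)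
    (h4 : ∀ a : ℚ, IsAtomS r a → tameS r a < ⊤) : False := by
  have hne1 : r ≠ 1 := by intro h; rw [h] at hn; simp at hn
  set n := r.num.toNat with hndef
  set d := r.den with hddef
  have hn2 : 2 ≤ n := by
    have : (1:ℤ) < n := by rw [hndef, Int.toNat_of_nonneg (Rat.num_pos.2 h0).le]; exact hn
    exact_mod_cast this
  have h1atom : IsAtomS r 1 := by
    have := pow_is_atom h0 hn hd 0
    rwa [pow_zero] at this
  obtain ⟨nb, hbound⟩ := extract_tame_bound (h4 1 h1atom)
  -- choose k
  have hkchoice : ∃ k : ℕ, 1 ≤ k ∧ ((1 < r → k = nb + 1) ∧ (r < 1 → (nb : ℚ) * r ^ k < 1)) := by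
    rcases lt_or_gt_of_ne hne1 with hrlt | hrgt
    · obtain ⟨k0, hk0⟩ := pow_unbounded_of_one_lt (R := ℚ) (nb : ℚ) (one_lt_inv₀ h0 |>.2 hrlt)
      refine ⟨k0 + 1, by omega, fun hgt => absurd hgt (not_lt.2 hrlt.le), fun _ => ?_⟩
      rw [inv_pow] at hk0
      have hrkpos : (0:ℚ) < r ^ k0 := pow_pos h0 k0
      have h1 : (nb : ℚ) * r ^ k0 < 1 := by
        calc (nb : ℚ) * r ^ k0 < (r ^ k0)⁻¹ * r ^ k0 := mul_lt_mul_of_pos_right hk0 hrkpos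
          _ = 1 := inv_mul_cancel₀ hrkpos.ne'
      have h2 : r ^ (k0 + 1) ≤ r ^ k0 := by
        rw [pow_succ]
        nlinarith [pow_pos h0 k0]
      nlinarith [Nat.cast_nonneg (α := ℚ) nb, pow_pos h0 (k0+1)]
    · exact ⟨nb + 1, by omega, fun _ => rfl, fun hlt => absurd hlt (not_lt.2 hrgt.le)⟩
  obtain ⟨k, hk1, hkgt, hklt⟩ := hkchoice
  -- the element x = n^k and factorization z
  have hdkQ : ((d : ℚ)) ^ k * r ^ k = ((n : ℚ)) ^ k := by
    have := pow_den_mul_pow h0 k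
    push_cast at this
    convert this using 2
  set x : ℚ := ((n ^ k : ℕ) : ℚ) with hxdef
  have hx : x ∈ S r := nat_mem_S r _
  have hx1 : x - 1 ∈ S r := by
    have h1 : x - 1 = ((n ^ k - 1 : ℕ) : ℚ) := by
      have : 1 ≤ n ^ k := Nat.one_le_pow _ _ (by omega)
      rw [hxdef]
      push_cast [Nat.cast_sub this]
      ring
    rw [h1]
    exact nat_mem_S r _
  set z : Multiset ℚ := Multiset.replicate (d ^ k) (r ^ k) with hzdef
  have hzfact : IsMFactorization r x z := by
    constructor
    · intro a ha
      rw [Multiset.eq_of_mem_replicate ha]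
      exact pow_is_atom h0 hn hd k
    · rw [hzdef, Multiset.sum_replicate, nsmul_eq_mul, hxdef]
      push_cast
      linear_combination hdkQ
  obtain ⟨z', hz'fact, h1z', hdist⟩ := hbound x hx hx1 z hzfact
  obtain ⟨hz'at, hz'sum⟩ := hz'fact
  -- counts
  obtain ⟨B0, hB0⟩ := exists_bound z' (fun a ha => atom_is_pow h0 (hz'at a ha))
  set B := max B0 (k + 1) with hBdef
  have hzB : ∀ a ∈ z', ∃ i, i < B ∧ a = r ^ i := by
    intro a ha
    obtain ⟨i, hi, hia⟩ := hB0 a ha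
    exact ⟨i, by omega, hia⟩
  obtain ⟨hs1, hs2⟩ := count_repr h0 hne1 B z' hzB
  set c : ℕ → ℕ := fun i => z'.count (r ^ i) with hcdef
  have hc0 : 1 ≤ c 0 := by
    rw [hcdef]
    simp only [pow_zero]
    exact Multiset.count_pos.2 h1z'
  have hkB : k + 1 ≤ B := by omega
  have hck : c k = z'.count (r ^ k) := rfl
  -- distance facts
  have hinter : Multiset.card (z ∩ z') ≤ c k := by
    rw [hzdef]
    exact inter_card_le _ _
  have hinter2 : Multiset.card (z ∩ z') ≤ Multiset.card z :=
    Multiset.card_le_card (Multiset.inter_le_left)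
  have hcardz : Multiset.card z = d ^ k := by rw [hzdef, Multiset.card_replicate]
  have hdA : Multiset.card z - Multiset.card (z ∩ z') ≤ nb :=
    le_trans (le_max_left _ _) hdist
  have hdB : Multiset.card z' - Multiset.card (z ∩ z') ≤ nb :=
    le_trans (le_max_right _ _) hdist
  have hsplitsum : ∑ i ∈ Finset.range k, c i + c k ≤ ∑ i ∈ Finset.range B, c i := by
    have h1 : ∑ i ∈ Finset.range (k+1), c i ≤ ∑ i ∈ Finset.range B, c i := by
      refine Finset.sum_le_sum_of_subset ?_
      exact Finset.range_subset_range.2 hkB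
    rw [Finset.sum_range_succ] at h1
    exact h1
  rcases lt_or_gt_of_ne hne1 with hrlt | hrgt
  · -- r < 1 : value argument
    have hrk := hklt hrlt
    -- c k ≤ d^k and c 0 + c k * r^k ≤ n^k
    have hpair : ((c 0 : ℚ)) + ((c k : ℚ)) * r ^ k ≤ x := by
      rw [← hz'sum, hs1]
      have hsub : ({0, k} : Finset ℕ) ⊆ Finset.range B := by
        intro i hi
        rcases Finset.mem_insert.1 hi with rfl | hi'
        · exact Finset.mem_range.2 (by omega)
        · rw [Finset.mem_singleton.1 hi']
          exact Finset.mem_range.2 (by omega)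
      have hpos : ∀ i ∈ Finset.range B, i ∉ ({0, k} : Finset ℕ) → 0 ≤ ((c i : ℚ)) * r ^ i := by
        intro i _ _
        positivity
      have := Finset.sum_le_sum_of_subset_of_nonneg hsub hpos
      rw [Finset.sum_pair (by omega : (0:ℕ) ≠ k)] at this
      simpa using this
    have hckdk : ((c k : ℚ)) * r ^ k ≤ x := by
      have : (0:ℚ) ≤ (c 0 : ℚ) := by positivity
      linarith
    have hckle : c k ≤ d ^ k := by
      have hQ : ((c k : ℚ)) ≤ ((d ^ k : ℕ) : ℚ) := by
        have hrkpos : (0:ℚ) < r ^ k := pow_pos h0 k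
        have hx2 : x = ((d ^ k : ℕ) : ℚ) * r ^ k := by
          rw [hxdef]; push_cast; linear_combination -hdkQ
        rw [hx2] at hckdk
        exact le_of_mul_le_mul_right hckdk hrkpos
      exact_mod_cast hQ
    -- card(z ∩ z') ≥ d^k - nb hence c k ≥ d^k - nb
    have hckge : d ^ k ≤ c k + nb := by
      rw [hcardz] at hdA hinter2
      omega
    -- value contradiction
    have hQge : ((d ^ k : ℕ) : ℚ) ≤ ((c k : ℚ)) + (nb : ℚ) := by exact_mod_cast hckge
    have hc0Q : (1:ℚ) ≤ (c 0 : ℚ) := by exact_mod_cast hc0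
    have hx2 : x = ((d ^ k : ℕ) : ℚ) * r ^ k := by
      rw [hxdef]; push_cast; linear_combination -hdkQ
    have hrkpos : (0:ℚ) < r ^ k := pow_pos h0 k
    nlinarith [hpair, hx2, hQge, hc0Q, hrk, hrkpos]
  · -- r > 1 : chain argument
    have hkval : k = nb + 1 := hkgt hrgt
    have hdn : d < n := den_lt_num h0 hrgt
    have heqQ : ∑ i ∈ Finset.range B, ((c i : ℚ)) * r ^ i = ((n ^ k : ℕ) : ℚ) := by
      rw [← hs1, hz'sum, hxdef]
    have heqN : ∑ i ∈ Finset.range B, c i * n ^ i * d ^ (B - i) = n ^ k * d ^ B :=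
      range_clear h0 heqQ
    have hchain := chain_lemma n d k B (by omega) hdn (coprime_nd h0) hk1 (by omega) c hc0 heqN
    -- card z' ≥ sum over range k + c k ; card ∩ ≤ c k
    rw [hs2] at hdB
    have h2 : ∑ i ∈ Finset.range B, c i ≤ nb + Multiset.card (z ∩ z') :=
      Nat.sub_le_iff_le_add.1 hdB
    have h3 : Multiset.card (z ∩ z') ≤ c k := hinter
    have h4 : ∑ i ∈ Finset.range k, c i + c k ≤ ∑ i ∈ Finset.range B, c i := hsplitsum
    have h5 : k + 1 ≤ ∑ i ∈ Finset.range k, c i := hchain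
    omega
end

lemma rat_natural_of_den_one {r : ℚ} (h0 : 0 < r) (hden : r.den = 1) : ∃ m : ℕ, r = m := by
  refine ⟨r.num.toNat, ?_⟩
  have h1 := Rat.num_div_den r
  rw [hden] at h1
  simp at h1
  rw [cast_num h0, h1]

theorem stmt19 (r : ℚ) (h0 : 0 < r) (hat : r = 1 ∨ 1 < r.num) :
    List.TFAE [
      (∃ m : ℕ, r = m),
      (⨆ a ∈ {a : ℚ | IsAtomS r a}, omegaS r a) < ⊤,
      (⨆ a ∈ {a : ℚ | IsAtomS r a}, tameS r a) < ⊤,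
      ∀ a : ℚ, IsAtomS r a → tameS r a < ⊤ ] := by
  tfae_have 1 → 2 := by
    rintro ⟨m, hm⟩
    exact imp12 h0 hm
  tfae_have 1 → 3 := by
    rintro ⟨m, hm⟩
    exact imp13 h0 hm
  tfae_have 3 → 4 := imp34
  tfae_have 2 → 1 := by
    intro h2
    by_contra hnot
    have hne1 : r ≠ 1 := fun h => hnot ⟨1, by rw [h]; norm_num⟩
    have hn : 1 < r.num := hat.resolve_left hne1
    have hd : 1 < r.den := by
      rcases Nat.lt_or_ge r.den 2 with h | h
      · have : r.den = 1 := by have := r.den_pos; omega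
        exact absurd (rat_natural_of_den_one h0 this) hnot
      · omega
    exact not_imp2 h0 hn hd h2
  tfae_have 4 → 1 := by
    intro h4
    by_contra hnot
    have hne1 : r ≠ 1 := fun h => hnot ⟨1, by rw [h]; norm_num⟩
    have hn : 1 < r.num := hat.resolve_left hne1
    have hd : 1 < r.den := by
      rcases Nat.lt_or_ge r.den 2 with h | h
      · have : r.den = 1 := by have := r.den_pos; omega
        exact absurd (rat_natural_of_den_one h0 this) hnot
      · omega
    exact not_imp4 h0 hn hd h4
  tfae_finish
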